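/- Let A and D be matrices with entries in a partially ordered commutative ring, with A tridiagonal and D diagonal. If A is totally positive of order r and D has nonnegative entries, then A + D is totally positive of order r. -/

import Mathlib

open Finset

/-- Strict monotone `Fin m → ℕ` grows at least linearly. -/
private lemma strictMono_nat_gap {m : ℕ} {f : Fin m → ℕ} (hf : StrictMono f) :
    ∀ (d : ℕ) (a b : Fin m), (a : ℕ) + d = (b : ℕ) → f a + d ≤ f b := by
  intro d
  induction d with
  | zero =>
      intro a b hab
      have : a = b := Fin.ext (by omega)
      subst this; omega
  | succ n ih =>
      intro a b hab
      have hb : 0 < (b : ℕ) := by omega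
      set b' : Fin m := ⟨(b : ℕ) - 1, by omega⟩ with hb'
      have h1 : f a + n ≤ f b' := ih a b' (by simp [hb']; omega)
      have h2 : f b' < f b := hf (by simp [Fin.lt_def, hb']; omega)
      omega

private lemma card_filter_lt_fin {m k : ℕ} (h : k ≤ m) :
    (Finset.univ.filter fun p : Fin m => (p : ℕ) < k).card = k := by
  have he : (Finset.univ.filter fun p : Fin m => (p : ℕ) < k)
      = Finset.map (Fin.castLEEmb h) Finset.univ := by
    ext p
    simp only [Finset.mem_filter, Finset.mem_univ, true_and, Finset.mem_map,
      Fin.castLEEmb, Function.Embedding.coeFn_mk]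
    constructor
    · intro hp
      exact ⟨⟨(p : ℕ), hp⟩, Fin.ext rfl⟩
    · rintro ⟨a, rfl⟩
      exact a.isLt
  rw [he]; simp

private lemma card_filter_le_fin' {m k : ℕ} (h : k ≤ m) :
    (Finset.univ.filter fun p : Fin m => k ≤ (p : ℕ)).card = m - k := by
  have h1 := Finset.card_filter_add_card_filter_not
    (s := (Finset.univ : Finset (Fin m))) (p := fun p : Fin m => (p : ℕ) < k)
  have h2 : (Finset.univ.filter fun p : Fin m => ¬ (p : ℕ) < k)
      = (Finset.univ.filter fun p : Fin m => k ≤ (p : ℕ)) := by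
    apply Finset.filter_congr; intro p _; simp [Nat.not_lt]
  rw [card_filter_lt_fin h, h2] at h1
  simp at h1
  omega

private lemma card_filter_perm {m : ℕ} (σ : Equiv.Perm (Fin m)) (P : Fin m → Prop)
    [DecidablePred P] :
    (Finset.univ.filter fun i : Fin m => P (σ i)).card
      = (Finset.univ.filter fun p : Fin m => P p).card := by
  have : (Finset.univ.filter fun i : Fin m => P (σ i))
      = Finset.map σ.symm.toEmbedding (Finset.univ.filter fun p : Fin m => P p) := by
    ext i
    simp only [Finset.mem_filter, Finset.mem_univ, true_and, Finset.mem_map,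
      Equiv.coe_toEmbedding]
    constructor
    · intro hi; exact ⟨σ i, hi, by simp⟩
    · rintro ⟨p, hp, rfl⟩; simpa using hp
  rw [this, Finset.card_map]

theorem tridiagonal_comparison {R : Type*} [CommRing R] [PartialOrder R] [IsOrderedRing R] (r : ℕ)
    (A D : ℕ → ℕ → R)
    (hA : ∀ i j : ℕ, 1 < |(i : ℤ) - (j : ℤ)| → A i j = 0)
    (hDoff : ∀ i j : ℕ, i ≠ j → D i j = 0)
    (hDpos : ∀ i : ℕ, 0 ≤ D i i)
    (hTP : ∀ m : ℕ, m ≤ r → ∀ (rr cc : Fin m → ℕ), StrictMono rr → StrictMono cc →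
        0 ≤ Matrix.det (Matrix.of fun p q : Fin m => A (rr p) (cc q))) :
    ∀ m : ℕ, m ≤ r → ∀ (rr cc : Fin m → ℕ), StrictMono rr → StrictMono cc →
      0 ≤ Matrix.det (Matrix.of fun p q : Fin m => A (rr p) (cc q) + D (rr p) (cc q)) := by
  -- Band property of A: nonzero entries are within distance 1.
  have hband : ∀ i j : ℕ, A i j ≠ 0 → (i : ℤ) - 1 ≤ j ∧ (j : ℤ) ≤ i + 1 := by
    intro i j hij
    by_contra hcon
    apply hij
    apply hA i j
    rw [lt_abs]
    omega
  -- Main auxiliary statement, by strong induction on m.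
  have main : ∀ m : ℕ, m ≤ r → ∀ (k : ℕ) (rr cc : Fin m → ℕ),
      StrictMono rr → StrictMono cc →
      0 ≤ Matrix.det (Matrix.of fun p q : Fin m =>
        A (rr p) (cc q) + if k ≤ (p : ℕ) then D (rr p) (cc q) else 0) := by
    intro m
    induction m using Nat.strong_induction_on with
    | _ m IH =>
    intro hmr
    -- inner downward induction on k via j with m ≤ k + j
    suffices hsuff : ∀ j k (rr cc : Fin m → ℕ), m ≤ k + j →
        StrictMono rr → StrictMono cc →
        0 ≤ Matrix.det (Matrix.of fun p q : Fin m =>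
          A (rr p) (cc q) + if k ≤ (p : ℕ) then D (rr p) (cc q) else 0) by
      intro k rr cc hrr hcc
      exact hsuff m k rr cc (by omega) hrr hcc
    intro j
    induction j with
    | zero =>
        intro k rr cc hmk hrr hcc
        have : (Matrix.of fun p q : Fin m =>
            A (rr p) (cc q) + if k ≤ (p : ℕ) then D (rr p) (cc q) else 0)
            = Matrix.of fun p q : Fin m => A (rr p) (cc q) := by
          ext p q
          have : ¬ k ≤ (p : ℕ) := by have := p.isLt; omega
          simp [this]
        rw [this]
        exact hTP m hmr rr cc hrr hcc
    | succ n ihj =>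
        intro k rr cc hmk hrr hcc
        by_cases hkm : m ≤ k + n
        · exact ihj k rr cc hkm hrr hcc
        have hk : k < m := by omega
        obtain ⟨m', rfl⟩ : ∃ m', m = m' + 1 := ⟨m - 1, by omega⟩
        set N : Matrix (Fin (m' + 1)) (Fin (m' + 1)) R :=
          Matrix.of (fun p q : Fin (m' + 1) =>
            A (rr p) (cc q) + if k ≤ (p : ℕ) then D (rr p) (cc q) else 0) with hN
        show 0 ≤ N.det
        set kf : Fin (m' + 1) := ⟨k, hk⟩ with hkf
        have hkv : (kf : ℕ) = k := rfl
        have hrowk : N kf = (fun q => A (rr kf) (cc q)) + fun q => D (rr kf) (cc q) := by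
          funext q
          simp [hN, hkf]
        have hsplit : N.det
            = (N.updateRow kf fun q => A (rr kf) (cc q)).det
              + (N.updateRow kf fun q => D (rr kf) (cc q)).det := by
          conv_lhs => rw [← Matrix.updateRow_eq_self N kf, hrowk]
          exact Matrix.det_updateRow_add N kf _ _
        rw [hsplit]
        have term1 : 0 ≤ (N.updateRow kf fun q => A (rr kf) (cc q)).det := by
          have heq : (N.updateRow kf fun q => A (rr kf) (cc q))
              = Matrix.of (fun p q : Fin (m' + 1) =>
                  A (rr p) (cc q) + if k + 1 ≤ (p : ℕ) then D (rr p) (cc q) else 0) := by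
            ext p q
            by_cases hp : p = kf
            · subst hp
              have : ¬ k + 1 ≤ (kf : ℕ) := by simp [hkf]
              simp [this, hkv]
            · have hpk : (p : ℕ) ≠ k := fun h => hp (Fin.ext h)
              rw [Matrix.updateRow_ne hp]
              simp only [hN, Matrix.of_apply]
              congr 1
              split_ifs with h1 h2 h2 <;> first | rfl | omega
          rw [heq]
          exact ihj (k + 1) rr cc (by omega) hrr hcc
        have term2 : 0 ≤ (N.updateRow kf fun q => D (rr kf) (cc q)).det := by
          set T := N.updateRow kf fun q => D (rr kf) (cc q) with hT
          by_cases hq : ∃ q₀ : Fin (m' + 1), cc q₀ = rr kf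
          · obtain ⟨q₀, hq₀⟩ := hq
            -- band facts for entries of T away from row kf
            have hTentry : ∀ p q : Fin (m' + 1), p ≠ kf → T p q ≠ 0 →
                ((rr p : ℤ) - 1 ≤ cc q ∧ (cc q : ℤ) ≤ rr p + 1) := by
              intro p q hp hne
              rw [hT, Matrix.updateRow_ne hp] at hne
              simp only [hN, Matrix.of_apply] at hne
              by_cases hAz : A (rr p) (cc q) = 0
              · have hDz : D (rr p) (cc q) ≠ 0 := by
                  intro h; apply hne; rw [hAz, h]; split_ifs <;> simp
                have : rr p = cc q := by
                  by_contra h; exact hDz (hDoff _ _ h)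
                omega
              · exact hband _ _ hAz
            have hTrowk : ∀ q : Fin (m' + 1), q ≠ q₀ → T kf q = 0 := by
              intro q hqq
              rw [hT, Matrix.updateRow_self]
              apply hDoff
              intro h
              exact hqq (hcc.injective (hq₀ ▸ h.symm))
            rcases lt_trichotomy (q₀ : ℕ) k with hlt | heqk | hgt
            · -- q₀ < k : determinant vanishes
              have : T.det = 0 := by
                rw [Matrix.det_apply]
                apply Finset.sum_eq_zero
                intro σ _
                have : ∏ i, T (σ i) i = 0 := by
                  by_contra hprod
                  have hnz : ∀ i, T (σ i) i ≠ 0 := by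
                    intro i hi
                    exact hprod (Finset.prod_eq_zero (Finset.mem_univ i) hi)
                  have key : ∀ i : Fin (m' + 1), (σ i : ℕ) ≤ k → (i : ℕ) ≤ (q₀ : ℕ) := by
                    intro i hi
                    by_cases hik : σ i = kf
                    · have : T kf i ≠ 0 := hik ▸ hnz i
                      have : i = q₀ := by
                        by_contra h; exact this (hTrowk i h)
                      omega
                    · have hband' := hTentry (σ i) i hik (hnz i)
                      have hlt' : (σ i : ℕ) < k := by
                        rcases Nat.lt_or_ge (σ i : ℕ) k with h | h
                        · exact h
                        · exact absurd (Fin.ext (by omega) : σ i = kf) hik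
                      have hgap : rr (σ i) + (k - (σ i : ℕ)) ≤ rr kf :=
                        strictMono_nat_gap hrr _ (σ i) kf (by simp [hkf]; omega)
                      have hcc_le : cc i ≤ cc q₀ := by
                        have h5 : (cc i : ℤ) ≤ rr (σ i) + 1 := hband'.2
                        rw [hq₀]
                        omega
                      exact Fin.le_def.mp (hcc.le_iff_le.mp hcc_le)
                  -- cardinality contradiction
                  have hsub : (Finset.univ.filter fun i : Fin (m' + 1) => (σ i : ℕ) < k + 1)
                      ⊆ Finset.univ.filter fun i : Fin (m' + 1) => (i : ℕ) < (q₀ : ℕ) + 1 := by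
                    intro i hi
                    simp only [Finset.mem_filter, Finset.mem_univ, true_and] at hi ⊢
                    have := key i (by omega); omega
                  have hcard := Finset.card_le_card hsub
                  rw [card_filter_perm σ (fun p => (p : ℕ) < k + 1),
                    card_filter_lt_fin (by omega : k + 1 ≤ m' + 1),
                    card_filter_lt_fin (by have := q₀.isLt; omega : (q₀ : ℕ) + 1 ≤ m' + 1)]
                    at hcard
                  omega
                rw [this, smul_zero]
              rw [this]
            · -- q₀ = k : Laplace expansion along row kf
              have hq₀kf : q₀ = kf := Fin.ext (by simp [hkf, heqk])
              rw [Matrix.det_succ_row T kf]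
              have hsum : ∑ q : Fin (m' + 1), (-1 : R) ^ ((kf : ℕ) + (q : ℕ)) * T kf q
                    * (T.submatrix kf.succAbove q.succAbove).det
                  = (-1 : R) ^ ((kf : ℕ) + (q₀ : ℕ)) * T kf q₀
                    * (T.submatrix kf.succAbove q₀.succAbove).det := by
                apply Finset.sum_eq_single
                · intro q _ hqq
                  rw [hTrowk q hqq, mul_zero, zero_mul]
                · intro h; exact absurd (Finset.mem_univ q₀) h
              rw [hsum, hq₀kf]
              have hsign : (-1 : R) ^ ((kf : ℕ) + (kf : ℕ)) = 1 :=
                Even.neg_one_pow ⟨(kf : ℕ), by omega⟩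
              rw [hsign, one_mul]
              have hd : 0 ≤ T kf kf := by
                rw [hT, Matrix.updateRow_self]
                have : cc kf = rr kf := hq₀kf ▸ hq₀
                rw [this]
                exact hDpos _
              have hminor : 0 ≤ (T.submatrix kf.succAbove kf.succAbove).det := by
                have heq : T.submatrix kf.succAbove kf.succAbove
                    = Matrix.of (fun p q : Fin m' =>
                        A ((rr ∘ kf.succAbove) p) ((cc ∘ kf.succAbove) q)
                          + if k ≤ (p : ℕ) then
                              D ((rr ∘ kf.succAbove) p) ((cc ∘ kf.succAbove) q) else 0) := by
                  ext p q
                  have hne : kf.succAbove p ≠ kf := Fin.succAbove_ne kf p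
                  rw [Matrix.submatrix_apply, hT, Matrix.updateRow_ne hne]
                  simp only [hN, Matrix.of_apply, Function.comp_apply]
                  congr 1
                  have hval : ((kf.succAbove p : Fin (m' + 1)) : ℕ)
                      = if (p : ℕ) < k then (p : ℕ) else (p : ℕ) + 1 := by
                    rw [Fin.succAbove]
                    split_ifs with h1 h2 h2
                    · simp
                    · exact absurd (by simpa [Fin.lt_def, hkf] using h1) h2
                    · exact absurd (by simp [Fin.lt_def, hkf]; omega) h1
                    · simp
                  have hiff : k ≤ ((kf.succAbove p : Fin (m' + 1)) : ℕ) ↔ k ≤ (p : ℕ) := by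
                    rw [hval]; split_ifs <;> omega
                  split_ifs with h1 h2 h2 <;>
                    first | rfl | (exact absurd (hiff.mp h1) h2) | (exact absurd (hiff.mpr h2) h1)
                rw [heq]
                exact IH m' (by omega) (by omega) k (rr ∘ kf.succAbove) (cc ∘ kf.succAbove)
                  (hrr.comp (Fin.strictMono_succAbove kf))
                  (hcc.comp (Fin.strictMono_succAbove kf))
              exact mul_nonneg hd hminor
            · -- q₀ > k : determinant vanishes
              have : T.det = 0 := by
                rw [Matrix.det_apply]
                apply Finset.sum_eq_zero
                intro σ _
                have : ∏ i, T (σ i) i = 0 := by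
                  by_contra hprod
                  have hnz : ∀ i, T (σ i) i ≠ 0 := by
                    intro i hi
                    exact hprod (Finset.prod_eq_zero (Finset.mem_univ i) hi)
                  have key : ∀ i : Fin (m' + 1), k ≤ (σ i : ℕ) → (q₀ : ℕ) ≤ (i : ℕ) := by
                    intro i hi
                    by_cases hik : σ i = kf
                    · have : T kf i ≠ 0 := hik ▸ hnz i
                      have : i = q₀ := by
                        by_contra h; exact this (hTrowk i h)
                      omega
                    · have hband' := hTentry (σ i) i hik (hnz i)
                      have hlt' : k < (σ i : ℕ) := by
                        rcases Nat.lt_or_ge k (σ i : ℕ) with h | h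
                        · exact h
                        · exact absurd (Fin.ext (by omega) : σ i = kf) hik
                      have hgap : rr kf + ((σ i : ℕ) - k) ≤ rr (σ i) :=
                        strictMono_nat_gap hrr _ kf (σ i) (by simp [hkf]; omega)
                      have hcc_le : cc q₀ ≤ cc i := by
                        have h5 : (rr (σ i) : ℤ) - 1 ≤ cc i := hband'.1
                        rw [hq₀]
                        omega
                      exact Fin.le_def.mp (hcc.le_iff_le.mp hcc_le)
                  have hsub : (Finset.univ.filter fun i : Fin (m' + 1) => k ≤ (σ i : ℕ))
                      ⊆ Finset.univ.filter fun i : Fin (m' + 1) => (q₀ : ℕ) ≤ (i : ℕ) := by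
                    intro i hi
                    simp only [Finset.mem_filter, Finset.mem_univ, true_and] at hi ⊢
                    exact key i hi
                  have hcard := Finset.card_le_card hsub
                  rw [card_filter_perm σ (fun p => k ≤ (p : ℕ)),
                    card_filter_le_fin' (by omega : k ≤ m' + 1),
                    card_filter_le_fin' (by have := q₀.isLt; omega : (q₀ : ℕ) ≤ m' + 1)]
                    at hcard
                  have := q₀.isLt
                  omega
                rw [this, smul_zero]
              rw [this]
          · -- row kf of T is zero
            have : T.det = 0 := by
              apply Matrix.det_eq_zero_of_row_eq_zero kf
              intro q
              rw [hT, Matrix.updateRow_self]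
              apply hDoff
              intro h
              exact hq ⟨q, h.symm⟩
            rw [this]
        exact add_nonneg term1 term2
  intro m hm rr cc hrr hcc
  have := main m hm 0 rr cc hrr hcc
  simpa using this
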